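/- Let ξ = Ō¹(ξ_1, ξ_2, …) where ξ_k are independent random variables with P(ξ_k = m) = p_{mk}, p_{mk} ≥ 0, ∑_m p_{mk} = 1. Then ξ has a discrete (purely atomic) distribution if and only if ∏_{k=1}^∞ max_m p_{mk} > 0, and ξ has a continuous distribution if and only if this infinite product diverges to 0. -/

import Mathlib

open MeasureTheory

noncomputable def osig (g : ℕ → ℕ) (k : ℕ) : ℝ := ∑ i ∈ Finset.range k, (g i : ℝ)

/-- The random real number `ξ = Ō¹(ξ_1, ξ_2, …)`. -/
noncomputable def bO1inf (g : ℕ → ℕ) : ℝ :=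
  ∑' n : ℕ, (-1 : ℝ) ^ n / ∏ k ∈ Finset.range (n + 1), osig g (k + 1)

namespace O1aux

def Valid (g : ℕ → ℕ) : Prop := ∀ k, 1 ≤ g k

noncomputable def Dd (g : ℕ → ℕ) (n : ℕ) : ℝ := ∏ k ∈ Finset.range (n + 1), osig g (k + 1)

lemma osig_succ (g : ℕ → ℕ) (k : ℕ) : osig g (k + 1) = osig g k + g k := by
  simp [osig, Finset.sum_range_succ]

lemma osig_ge (g : ℕ → ℕ) (hg : Valid g) (k : ℕ) : (k : ℝ) ≤ osig g k := by
  induction k with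
  | zero => simp [osig]
  | succ k ih =>
    rw [osig_succ]
    have : (1:ℝ) ≤ (g k : ℝ) := by exact_mod_cast hg k
    push_cast
    linarith

lemma Dd_succ (g : ℕ → ℕ) (n : ℕ) : Dd g (n + 1) = Dd g n * osig g (n + 2) := by
  simp [Dd, Finset.prod_range_succ]

lemma Dd_ge (g : ℕ → ℕ) (hg : Valid g) (n : ℕ) : (2:ℝ) ^ n ≤ Dd g n := by
  induction n with
  | zero =>
    have := osig_ge g hg 1
    simp only [Dd]
    simpa using this
  | succ n ih =>
    rw [Dd_succ]
    have h1 : ((n:ℝ) + 2) ≤ osig g (n + 2) := by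
      have := osig_ge g hg (n + 2); push_cast at this ⊢; linarith
    have h2 : (2:ℝ) ≤ osig g (n + 2) := by
      have : (0:ℝ) ≤ (n:ℝ) := Nat.cast_nonneg n
      linarith
    have hD : (0:ℝ) < Dd g n := lt_of_lt_of_le (by positivity) ih
    calc (2:ℝ) ^ (n+1) = 2 ^ n * 2 := by ring
    _ ≤ Dd g n * osig g (n + 2) := by
      apply mul_le_mul ih h2 (by norm_num) (le_of_lt hD)

lemma Dd_pos (g : ℕ → ℕ) (hg : Valid g) (n : ℕ) : (0:ℝ) < Dd g n :=
  lt_of_lt_of_le (by positivity) (Dd_ge g hg n)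

lemma Dd_strict (g : ℕ → ℕ) (hg : Valid g) (n : ℕ) : Dd g n < Dd g (n + 1) := by
  rw [Dd_succ]
  have h2 : (2:ℝ) ≤ osig g (n + 2) := by
    have := osig_ge g hg (n + 2); push_cast at this; linarith [Nat.cast_nonneg (α := ℝ) n]
  nlinarith [Dd_pos g hg n]

noncomputable def aa (g : ℕ → ℕ) (n : ℕ) : ℝ := (Dd g n)⁻¹

lemma aa_pos (g : ℕ → ℕ) (hg : Valid g) (n : ℕ) : 0 < aa g n :=
  inv_pos.mpr (Dd_pos g hg n)

lemma aa_strict (g : ℕ → ℕ) (hg : Valid g) (n : ℕ) : aa g (n + 1) < aa g n :=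
  inv_strictAnti₀ (Dd_pos g hg n) (Dd_strict g hg n)

lemma aa_summable (g : ℕ → ℕ) (hg : Valid g) : Summable (aa g) := by
  apply Summable.of_nonneg_of_le (fun n => le_of_lt (aa_pos g hg n))
    (f := fun n => ((1:ℝ)/2) ^ n)
  · intro n
    rw [aa, one_div, inv_pow]
    exact inv_anti₀ (by positivity) (Dd_ge g hg n)
  · exact summable_geometric_of_lt_one (by norm_num) (by norm_num)

variable {a : ℕ → ℝ}

lemma alt_summable (ha : Summable a) : Summable (fun n => (-1:ℝ)^n * a n) := by
  apply Summable.of_abs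
  apply ha.abs.congr
  intro n
  simp [abs_mul]

lemma alt_ge (ha : Summable a) (hpos : ∀ n, 0 < a n) (hdec : ∀ n, a (n+1) < a n) :
    a 0 - a 1 ≤ ∑' n, (-1:ℝ)^n * a n := by
  set f : ℕ → ℝ := fun n => (-1:ℝ)^n * a n with hf
  have hsf : Summable f := alt_summable ha
  have hinj2 : Function.Injective (fun k : ℕ => 2 * k) := by
    intro x y h; simp only at h; omega
  have hinj2' : Function.Injective (fun k : ℕ => 2 * k + 1) := by
    intro x y h; simp only at h; omega
  have he : Summable (fun k => f (2 * k)) := hsf.comp_injective hinj2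
  have ho : Summable (fun k => f (2 * k + 1)) := hsf.comp_injective hinj2'
  have key : (∑' k, f (2*k)) + ∑' k, f (2*k+1) = ∑' n, f n := tsum_even_add_odd he ho
  have hsum2 : ∑' n, f n = ∑' k, (f (2*k) + f (2*k+1)) := by
    rw [Summable.tsum_add he ho, key]
  have hpair : ∀ k, f (2*k) + f (2*k+1) = a (2*k) - a (2*k+1) := by
    intro k
    have h1 : ((-1:ℝ))^(2*k) = 1 := by
      rw [pow_mul]; norm_num
    have h2 : ((-1:ℝ))^(2*k+1) = -1 := by
      rw [pow_succ, pow_mul]; norm_num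
    simp [hf, h1, h2]; ring
  rw [hsum2]
  have hspair : Summable (fun k => f (2*k) + f (2*k+1)) := he.add ho
  have h0 : f (2*0) + f (2*0+1) = a 0 - a 1 := by simpa using hpair 0
  calc a 0 - a 1 = f (2*0) + f (2*0+1) := h0.symm
  _ ≤ ∑' k, (f (2*k) + f (2*k+1)) := by
    apply Summable.le_tsum hspair 0
    intro j _
    rw [hpair j]
    have := hdec (2*j)
    linarith

lemma alt_pos (ha : Summable a) (hpos : ∀ n, 0 < a n) (hdec : ∀ n, a (n+1) < a n) :
    0 < ∑' n, (-1:ℝ)^n * a n :=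
  lt_of_lt_of_le (by linarith [hdec 0]) (alt_ge ha hpos hdec)

lemma alt_lt (ha : Summable a) (hpos : ∀ n, 0 < a n) (hdec : ∀ n, a (n+1) < a n) :
    ∑' n, (-1:ℝ)^n * a n < a 0 := by
  have hsf : Summable (fun n => (-1:ℝ)^n * a n) := alt_summable ha
  have hshift : ∑' n, (-1:ℝ)^n * a n
      = (-1:ℝ)^0 * a 0 + ∑' n, (-1:ℝ)^(n+1) * a (n+1) := Summable.tsum_eq_zero_add hsf
  have h2 : ∑' n, (-1:ℝ)^(n+1) * a (n+1) = - ∑' n, (-1:ℝ)^n * a (n+1) := by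
    rw [← tsum_neg]
    congr 1; funext n; ring
  have ha' : Summable (fun n => a (n+1)) := ha.comp_injective Nat.succ_injective
  have hpos' : 0 < ∑' n, (-1:ℝ)^n * a (n+1) :=
    alt_pos ha' (fun n => hpos _) (fun n => hdec _)
  rw [hshift, h2]
  simp only [pow_zero, one_mul]
  linarith

end O1aux

namespace O1aux

lemma bO1inf_eq (g : ℕ → ℕ) : bO1inf g = ∑' n, (-1:ℝ)^n * aa g n := by
  unfold bO1inf
  exact tsum_congr (fun n => by rw [aa, div_eq_mul_inv, Dd])

lemma aa_zero (g : ℕ → ℕ) : aa g 0 = ((g 0 : ℝ))⁻¹ := by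
  simp [aa, Dd, osig]

lemma osig_one (g : ℕ → ℕ) : osig g 1 = (g 0 : ℝ) := by simp [osig]

lemma osig_two (g : ℕ → ℕ) : osig g 2 = (g 0 : ℝ) + (g 1 : ℝ) := by
  rw [show (2:ℕ) = 1 + 1 from rfl, osig_succ, osig_one]

lemma aa_one (g : ℕ → ℕ) : aa g 1 = ((g 0 : ℝ) * osig g 2)⁻¹ := by
  have hD : Dd g 1 = osig g 1 * osig g 2 := by
    simp [Dd, Finset.prod_range_succ]
  rw [aa, hD, osig_one]

lemma bO1inf_lt (g : ℕ → ℕ) (hg : Valid g) : bO1inf g < ((g 0 : ℝ))⁻¹ := by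
  rw [bO1inf_eq]
  have h := alt_lt (aa_summable g hg) (aa_pos g hg) (aa_strict g hg)
  rwa [aa_zero] at h

lemma bO1inf_ge (g : ℕ → ℕ) (hg : Valid g) : ((g 0 : ℝ) + 1)⁻¹ ≤ bO1inf g := by
  rw [bO1inf_eq]
  have h := alt_ge (aa_summable g hg) (aa_pos g hg) (aa_strict g hg)
  refine le_trans ?_ h
  rw [aa_zero, aa_one]
  set A : ℝ := (g 0 : ℝ) with hA
  set B : ℝ := osig g 2 with hB
  have hA1 : (1:ℝ) ≤ A := by rw [hA]; exact_mod_cast hg 0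
  have hg1 : (1:ℝ) ≤ (g 1 : ℝ) := by exact_mod_cast hg 1
  have hBA : A + 1 ≤ B := by
    rw [hB, osig_two, hA]; linarith
  have hApos : (0:ℝ) < A := by linarith
  have hBpos : (0:ℝ) < B := by linarith
  have e : A⁻¹ - (A*B)⁻¹ - (A+1)⁻¹ = (B - A - 1) / (A*B*(A+1)) := by
    field_simp
    ring
  have h2 : (0:ℝ) ≤ (B - A - 1) / (A*B*(A+1)) :=
    div_nonneg (by linarith) (by positivity)
  linarith

lemma bO1inf_pos (g : ℕ → ℕ) (hg : Valid g) : 0 < bO1inf g :=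
  lt_of_lt_of_le (by positivity) (bO1inf_ge g hg)

lemma head_eq (g h : ℕ → ℕ) (hg : Valid g) (hh : Valid h) (heq : bO1inf g = bO1inf h) :
    g 0 = h 0 := by
  by_contra hne
  rcases Nat.lt_or_ge (g 0) (h 0) with hlt | hge
  · have h1 : ((h 0 : ℝ))⁻¹ ≤ ((g 0 : ℝ) + 1)⁻¹ := by
      apply inv_anti₀ (by positivity)
      exact_mod_cast hlt
    have := lt_of_lt_of_le (bO1inf_lt h hh) (le_trans h1 (bO1inf_ge g hg))
    rw [heq] at this; exact lt_irrefl _ this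
  · have hlt : h 0 < g 0 := lt_of_le_of_ne hge (fun e => hne e.symm)
    have h1 : ((g 0 : ℝ))⁻¹ ≤ ((h 0 : ℝ) + 1)⁻¹ := by
      apply inv_anti₀ (by positivity)
      exact_mod_cast hlt
    have := lt_of_lt_of_le (bO1inf_lt g hg) (le_trans h1 (bO1inf_ge h hh))
    rw [heq] at this; exact lt_irrefl _ this

def smerge (g : ℕ → ℕ) : ℕ → ℕ
  | 0 => g 0 + g 1
  | (k+1) => g (k+2)

lemma smerge_valid (g : ℕ → ℕ) (hg : Valid g) : Valid (smerge g) := by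
  intro k
  cases k with
  | zero => have := hg 0; simp [smerge]; omega
  | succ k => exact hg (k+2)

lemma osig_smerge (g : ℕ → ℕ) (k : ℕ) : osig (smerge g) (k + 1) = osig g (k + 2) := by
  induction k with
  | zero =>
    rw [osig_one, osig_two, smerge]
    push_cast; ring
  | succ k ih =>
    calc osig (smerge g) (k+1+1) = osig (smerge g) (k+1) + (smerge g (k+1) : ℝ) :=
          osig_succ _ _
    _ = osig g (k+2) + (g (k+2) : ℝ) := by rw [ih]; rfl
    _ = osig g (k+1+2) := (osig_succ g (k+2)).symm

lemma Dd_smerge (g : ℕ → ℕ) (n : ℕ) :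
    Dd g (n + 1) = (g 0 : ℝ) * Dd (smerge g) n := by
  have h1 : Dd g (n+1) = ∏ k ∈ Finset.range (n+2), osig g (k+1) := rfl
  rw [h1, Finset.prod_range_succ']
  have h2 : ∀ k, osig g (k + 1 + 1) = osig (smerge g) (k + 1) := fun k => (osig_smerge g k).symm
  rw [Finset.prod_congr rfl (fun k _ => h2 k), osig_one, mul_comm]
  rfl

lemma shift_identity (g : ℕ → ℕ) (hg : Valid g) :
    bO1inf g = ((g 0 : ℝ))⁻¹ * (1 - bO1inf (smerge g)) := by
  have hsf : Summable (fun n => (-1:ℝ)^n * aa g n) := alt_summable (aa_summable g hg)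
  rw [bO1inf_eq]
  rw [Summable.tsum_eq_zero_add hsf]
  have hterm : ∀ n, (-1:ℝ)^(n+1) * aa g (n+1)
      = -((g 0 : ℝ))⁻¹ * ((-1:ℝ)^n * aa (smerge g) n) := by
    intro n
    rw [aa, aa, Dd_smerge, mul_inv, pow_succ]
    ring
  have hsum : ∑' n, (-1:ℝ)^(n+1) * aa g (n+1)
      = -((g 0 : ℝ))⁻¹ * ∑' n, (-1:ℝ)^n * aa (smerge g) n := by
    rw [← tsum_mul_left]
    exact tsum_congr hterm
  rw [hsum, ← bO1inf_eq, aa_zero]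
  ring

lemma tail_eq (g h : ℕ → ℕ) (hg : Valid g) (hh : Valid h) (heq : bO1inf g = bO1inf h) :
    bO1inf (smerge g) = bO1inf (smerge h) := by
  have h0 := head_eq g h hg hh heq
  have hg0 : ((g 0 : ℝ)) ≠ 0 := by
    have := hg 0; positivity
  have e1 := shift_identity g hg
  have e2 := shift_identity h hh
  rw [h0] at e1 hg0
  rw [e1, e2] at heq
  have := mul_left_cancel₀ (inv_ne_zero hg0) heq
  linarith

theorem bO1inf_injOn (g h : ℕ → ℕ) (hg : Valid g) (hh : Valid h)
    (heq : bO1inf g = bO1inf h) : g = h := by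
  funext n
  induction n using Nat.strong_induction_on generalizing g h with
  | _ n ih =>
    match n with
    | 0 => exact head_eq g h hg hh heq
    | 1 =>
      have h0 := head_eq g h hg hh heq
      have h1 := head_eq (smerge g) (smerge h) (smerge_valid g hg) (smerge_valid h hh)
        (tail_eq g h hg hh heq)
      simp only [smerge] at h1
      omega
    | (n+2) =>
      have := ih (n+1) (by omega) (smerge g) (smerge h) (smerge_valid g hg)
        (smerge_valid h hh) (tail_eq g h hg hh heq)
      simpa [smerge] using this

end O1aux

namespace O1aux

open Filter

def Vset : Set (ℕ → ℕ) := {g | Valid g}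

lemma measurableSet_Vset : MeasurableSet Vset := by
  have h : Vset = ⋂ k, (fun g : ℕ → ℕ => g k) ⁻¹' {n | 1 ≤ n} := by
    ext g; simp [Vset, Valid]
  rw [h]
  exact MeasurableSet.iInter fun k =>
    (measurable_pi_apply k) MeasurableSpace.measurableSet_top

lemma measurable_osig (k : ℕ) : Measurable (fun g : ℕ → ℕ => osig g k) := by
  unfold osig
  exact Finset.measurable_sum _ fun i _ =>
    measurable_from_top.comp (measurable_pi_apply i)

lemma measurable_Dd (n : ℕ) : Measurable (fun g : ℕ → ℕ => Dd g n) := by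
  unfold Dd
  exact Finset.measurable_prod _ fun k _ => measurable_osig (k + 1)

lemma summable_terms (g : ℕ → ℕ) (hg : Valid g) :
    Summable (fun n => (-1:ℝ)^n / Dd g n) :=
  (alt_summable (aa_summable g hg)).congr fun n => by rw [aa, ← div_eq_mul_inv]

noncomputable def Tt : (ℕ → ℕ) → ℝ := Vset.indicator bO1inf

lemma measurable_Tt : Measurable Tt := by
  apply measurable_of_tendsto_metrizable
    (f := fun N => Vset.indicator (fun g => ∑ n ∈ Finset.range N, (-1:ℝ)^n / Dd g n))
  · intro N
    exact (Finset.measurable_sum _ fun n _ =>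
      (measurable_const.div (measurable_Dd n))).indicator measurableSet_Vset
  · rw [tendsto_pi_nhds]
    intro g
    by_cases hg : g ∈ Vset
    · simp only [Set.indicator_of_mem hg, Tt]
      have hs := summable_terms g hg
      have h2 : bO1inf g = ∑' n, (-1:ℝ)^n / Dd g n := rfl
      rw [h2]
      exact hs.hasSum.tendsto_sum_nat
    · simp only [Set.indicator_of_notMem hg, Tt]
      exact tendsto_const_nhds

end O1aux

namespace O1aux

open Filter Topology

lemma attain {f : ℕ → ℝ} (hs : Summable f) (h0 : ∀ m, 0 ≤ f m) (hq : 0 < ⨆ m, f m) :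
    ∃ m0, ∀ m, f m ≤ f m0 := by
  set q := ⨆ m, f m with hqd
  have htend : Tendsto f atTop (𝓝 0) := hs.tendsto_atTop_zero
  have hev : ∀ᶠ m in atTop, f m < q / 2 :=
    htend.eventually (gt_mem_nhds (by linarith))
  obtain ⟨N, hN⟩ := eventually_atTop.mp hev
  obtain ⟨m1, hm1⟩ := exists_lt_of_lt_ciSup (show q / 2 < q by linarith)
  obtain ⟨m0, hm0mem, hm0⟩ := Finset.exists_max_image (insert m1 (Finset.range N)) f
    ⟨m1, Finset.mem_insert_self _ _⟩
  refine ⟨m0, fun m => ?_⟩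
  by_cases hm : m < N
  · exact hm0 m (Finset.mem_insert_of_mem (Finset.mem_range.mpr hm))
  · have h1 : f m < q / 2 := hN m (le_of_not_gt hm)
    have h2 : f m1 ≤ f m0 := hm0 m1 (Finset.mem_insert_self _ _)
    linarith

lemma countable_eventually_eq (m : ℕ → ℕ) :
    Set.Countable {g : ℕ → ℕ | ∃ N, ∀ k, N ≤ k → g k = m k} := by
  have h : {g : ℕ → ℕ | ∃ N, ∀ k, N ≤ k → g k = m k}
      = ⋃ N : ℕ, {g : ℕ → ℕ | ∀ k, N ≤ k → g k = m k} := by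
    ext g; simp
  rw [h]
  apply Set.countable_iUnion
  intro N
  classical
  have hsub : {g : ℕ → ℕ | ∀ k, N ≤ k → g k = m k} ⊆
      Set.range (fun (v : Fin N → ℕ) (k : ℕ) => if h : k < N then v ⟨k, h⟩ else m k) := by
    intro g hg
    refine ⟨fun i => g i, ?_⟩
    funext k
    by_cases hk : k < N
    · simp [hk]
    · simp only [hk, dif_neg, not_false_iff]
      exact (hg k (le_of_not_gt hk)).symm
  exact Set.Countable.mono hsub (Set.countable_range _)

end O1aux

open Filter Topology

/-- Theorem 8: for `ξ = Ō¹(ξ_1,ξ_2,…)` with independent O¹-symbols `ξ_k`,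
`P(ξ_k = m) = p_{mk}`, the distribution of `ξ` is discrete (purely atomic, i.e. carried by
a countable set) iff `∏_{k=1}^∞ max_m p_{mk} > 0`, and it is continuous (every singleton is
null) iff that infinite product (the infimum of the partial products) equals `0`. -/
theorem o1_random_discrete_iff_product_positive
    {Ω : Type*} [MeasurableSpace Ω] (P : Measure Ω) [IsProbabilityMeasure P]
    (ξk : ℕ → Ω → ℕ) (hmeas : ∀ k, Measurable (ξk k))
    (hindep : ProbabilityTheory.iIndepFun ξk P)
    (p : ℕ → ℕ → ℝ) (hp0 : ∀ m k, 0 ≤ p m k) (hzero : ∀ k, p 0 k = 0)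
    (hsum : ∀ k, ∑' m, p m k = 1)
    (hp : ∀ m k, P {ω | ξk k ω = m} = ENNReal.ofReal (p m k))
    (ξ : Ω → ℝ) (hξ : ∀ ω, ξ ω = bO1inf (fun k => ξk k ω)) :
    ((∃ s : Set ℝ, s.Countable ∧ P.map ξ s = 1) ↔
      0 < ⨅ n, ∏ k ∈ Finset.range n, ⨆ m, p m k) ∧
    ((∀ x : ℝ, P.map ξ {x} = 0) ↔
      (⨅ n, ∏ k ∈ Finset.range n, ⨆ m, p m k) = 0) := by

  classical
  set q : ℕ → ℝ := fun k => ⨆ m, p m k with hq_def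
  set W : ℕ → ℝ := fun n => ∏ k ∈ Finset.range n, q k with hW_def
  set Q : ℝ := ⨅ n, W n with hQ_def
  -- basic facts about p, q, W, Q
  have hpsum : ∀ k, Summable fun m => p m k := by
    intro k; by_contra hns
    have h1 := hsum k
    rw [tsum_eq_zero_of_not_summable hns] at h1
    norm_num at h1
  have hple1 : ∀ m k, p m k ≤ 1 := by
    intro m k
    have := Summable.le_tsum (hpsum k) m (fun j _ => hp0 j k)
    rwa [hsum k] at this
  have hbdd : ∀ k, BddAbove (Set.range fun m => p m k) := by
    intro k; exact ⟨1, by rintro x ⟨m, rfl⟩; exact hple1 m k⟩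
  have hq_ge : ∀ m k, p m k ≤ q k := fun m k => le_ciSup (hbdd k) m
  have hq0 : ∀ k, 0 ≤ q k := fun k => le_trans (hp0 0 k) (hq_ge 0 k)
  have hq1 : ∀ k, q k ≤ 1 := fun k => ciSup_le fun m => hple1 m k
  have hW0 : ∀ n, 0 ≤ W n := fun n => Finset.prod_nonneg fun k _ => hq0 k
  have hWsucc : ∀ n, W (n + 1) = W n * q n := fun n => Finset.prod_range_succ _ n
  have hWanti : Antitone W := by
    apply antitone_nat_of_succ_le
    intro n
    rw [hWsucc n]
    calc W n * q n ≤ W n * 1 := mul_le_mul_of_nonneg_left (hq1 n) (hW0 n)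
    _ = W n := mul_one _
  have hWbdd : BddBelow (Set.range W) := ⟨0, by rintro x ⟨n, rfl⟩; exact hW0 n⟩
  have hQ0 : 0 ≤ Q := le_ciInf hW0
  have hQle : ∀ n, Q ≤ W n := fun n => ciInf_le hWbdd n
  have hWtend : Tendsto W atTop (𝓝 Q) := tendsto_atTop_ciInf hWanti hWbdd
  -- the sequence of symbols
  set seq : Ω → (ℕ → ℕ) := fun ω k => ξk k ω with hseq_def
  have hseq_meas : Measurable seq := measurable_pi_lambda _ hmeas
  have hnullzero : ∀ k, P {ω | ξk k ω = 0} = 0 := by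
    intro k; rw [hp 0 k, hzero k]; simp
  have hae_valid : ∀ᵐ ω ∂P, O1aux.Valid (seq ω) := by
    rw [MeasureTheory.ae_iff]
    apply measure_mono_null (t := ⋃ k, {ω | ξk k ω = 0})
    · intro ω hω
      simp only [Set.mem_setOf_eq, O1aux.Valid] at hω
      push_neg at hω
      obtain ⟨k, hk⟩ := hω
      exact Set.mem_iUnion.mpr ⟨k, by simpa using Nat.lt_one_iff.mp hk⟩
    · exact measure_iUnion_null hnullzero
  have hξae : ξ =ᵐ[P] (O1aux.Tt ∘ seq) := by
    filter_upwards [hae_valid] with ω hω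
    have h1 : O1aux.Tt (seq ω) = bO1inf (seq ω) :=
      Set.indicator_of_mem (show seq ω ∈ O1aux.Vset from hω) _
    rw [hξ ω]
    exact h1.symm
  have haem : AEMeasurable ξ P := ⟨O1aux.Tt ∘ seq, O1aux.measurable_Tt.comp hseq_meas, hξae⟩
  have hmapP : ∀ s : Set ℝ, MeasurableSet s → P.map ξ s = P (ξ ⁻¹' s) :=
    fun s hs => Measure.map_apply_of_aemeasurable haem hs
  -- the finite-dimensional bound coming from independence
  have hfin : ∀ (g : ℕ → ℕ) (n : ℕ),
      P {ω | ∀ k, ξk k ω = g k} ≤ ENNReal.ofReal (W n) := by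
    intro g n
    have hsets : ∀ i, i ∈ Finset.range n → MeasurableSet ({g i} : Set ℕ) :=
      fun i _ => measurableSet_singleton _
    have hind := hindep.measure_inter_preimage_eq_mul
      (sets := fun i => ({g i} : Set ℕ)) (Finset.range n) hsets
    have hsub : {ω | ∀ k, ξk k ω = g k} ⊆ ⋂ i ∈ Finset.range n, ξk i ⁻¹' {g i} := by
      intro ω hω
      simp only [Set.mem_iInter, Set.mem_preimage, Set.mem_singleton_iff]
      exact fun i _ => hω i
    calc P {ω | ∀ k, ξk k ω = g k} ≤ P (⋂ i ∈ Finset.range n, ξk i ⁻¹' {g i}) :=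
          measure_mono hsub
    _ = ∏ i ∈ Finset.range n, P (ξk i ⁻¹' {g i}) := hind
    _ = ∏ i ∈ Finset.range n, ENNReal.ofReal (p (g i) i) := by
        apply Finset.prod_congr rfl
        intro i _
        have he : ξk i ⁻¹' {g i} = {ω | ξk i ω = g i} := by ext ω; simp
        rw [he, hp (g i) i]
    _ = ENNReal.ofReal (∏ i ∈ Finset.range n, p (g i) i) :=
        (ENNReal.ofReal_prod_of_nonneg fun i _ => hp0 (g i) i).symm
    _ ≤ ENNReal.ofReal (W n) := by
        apply ENNReal.ofReal_le_ofReal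
        exact Finset.prod_le_prod (fun i _ => hp0 (g i) i) (fun i _ => hq_ge (g i) i)
  -- continuity direction
  have hcont : Q = 0 → ∀ x : ℝ, P.map ξ {x} = 0 := by
    intro hQz x
    rw [hmapP {x} (measurableSet_singleton x)]
    have hvc : P ({ω | O1aux.Valid (seq ω)})ᶜ = 0 := by
      have h1 : ({ω | O1aux.Valid (seq ω)})ᶜ = {ω | ¬ O1aux.Valid (seq ω)} := rfl
      rw [h1, ← MeasureTheory.ae_iff]
      exact hae_valid
    rw [← measure_inter_conull hvc]
    have htend2 : Tendsto (fun n => ENNReal.ofReal (W n)) atTop (𝓝 0) := by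
      have h2 := (ENNReal.continuous_ofReal.tendsto Q).comp hWtend
      rw [hQz] at h2
      simpa [Function.comp_def] using h2
    by_cases hex : ∃ g : ℕ → ℕ, O1aux.Valid g ∧ bO1inf g = x
    · obtain ⟨g, hgv, hgx⟩ := hex
      have hsub : ξ ⁻¹' {x} ∩ {ω | O1aux.Valid (seq ω)} ⊆ {ω | ∀ k, ξk k ω = g k} := by
        rintro ω ⟨hω1, hω2⟩
        have hx1 : ξ ω = x := hω1
        rw [hξ ω] at hx1
        have hbeq : bO1inf (seq ω) = bO1inf g := by rw [hgx]; exact hx1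
        have heq := O1aux.bO1inf_injOn (seq ω) g hω2 hgv hbeq
        exact fun k => congrFun heq k
      have hle : ∀ n, P (ξ ⁻¹' {x} ∩ {ω | O1aux.Valid (seq ω)}) ≤ ENNReal.ofReal (W n) :=
        fun n => le_trans (measure_mono hsub) (hfin g n)
      have hfinal := ge_of_tendsto' htend2 hle
      exact le_antisymm hfinal zero_le
    · have hempty : ξ ⁻¹' {x} ∩ {ω | O1aux.Valid (seq ω)} = ∅ := by
        ext ω
        simp only [Set.mem_inter_iff, Set.mem_preimage, Set.mem_singleton_iff,
          Set.mem_setOf_eq, Set.mem_empty_iff_false, iff_false, not_and]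
        intro h1 h2
        exact hex ⟨seq ω, h2, by rw [← hξ ω]; exact h1⟩
      rw [hempty]
      simp
  -- discreteness direction
  have hdisc : 0 < Q → ∃ s : Set ℝ, s.Countable ∧ P.map ξ s = 1 := by
    intro hQpos
    have hqpos : ∀ k, 0 < q k := by
      intro k
      rcases lt_or_eq_of_le (hq0 k) with h | h
      · exact h
      · exfalso
        have hWz : W (k+1) = 0 :=
          Finset.prod_eq_zero (Finset.self_mem_range_succ k) h.symm
        have := hQle (k+1)
        rw [hWz] at this
        linarith
    have hqsup : ∀ k, ∃ m0, ∀ m, p m k ≤ p m0 k :=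
      fun k => O1aux.attain (hpsum k) (fun m => hp0 m k) (hqpos k)
    choose mk hmk using hqsup
    have hpm : ∀ k, p (mk k) k = q k :=
      fun k => le_antisymm (hq_ge (mk k) k) (ciSup_le (hmk k))
    have hsum1q : Summable (fun k => 1 - q k) := by
      apply summable_of_sum_range_le (c := -Real.log Q) (fun k => by linarith [hq1 k])
      intro n
      have h1 : ∀ k ∈ Finset.range n, 1 - q k ≤ -Real.log (q k) := by
        intro k _
        have := Real.log_le_sub_one_of_pos (hqpos k)
        linarith
      have h2 : ∑ k ∈ Finset.range n, -Real.log (q k) = -Real.log (W n) := by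
        rw [hW_def, Real.log_prod (fun k _ => ne_of_gt (hqpos k))]
        simp
      calc ∑ k ∈ Finset.range n, (1 - q k) ≤ ∑ k ∈ Finset.range n, -Real.log (q k) :=
            Finset.sum_le_sum h1
      _ = -Real.log (W n) := h2
      _ ≤ -Real.log Q := by
          have := Real.log_le_log hQpos (hQle n)
          linarith
    set E : ℕ → Set Ω := fun k => {ω | ξk k ω ≠ mk k} with hE_def
    have hEeq : ∀ k, E k = {ω | ξk k ω = mk k}ᶜ := by
      intro k; ext ω; simp [hE_def]
    have hsetseq' : ∀ {k}, {ω | ξk k ω = mk k} = ξk k ⁻¹' {mk k} := by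
      intro k; ext ω; simp
    have hEmeas : ∀ k, MeasurableSet (E k) := by
      intro k
      rw [hEeq k, hsetseq']
      exact ((hmeas k) (measurableSet_singleton (mk k))).compl
    have hPE : ∀ k, P (E k) = ENNReal.ofReal (1 - q k) := by
      intro k
      have hms1 : MeasurableSet {ω | ξk k ω = mk k} := by
        rw [hsetseq']
        exact (hmeas k) (measurableSet_singleton (mk k))
      rw [hEeq k, prob_compl_eq_one_sub hms1, hp, hpm k]
      rw [← ENNReal.ofReal_one, ← ENNReal.ofReal_sub _ (hq0 k)]
    have hBC : P (Filter.limsup E Filter.atTop) = 0 := by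
      apply measure_limsup_atTop_eq_zero
      have h1 : ∑' k, P (E k) = ENNReal.ofReal (∑' k, (1 - q k)) := by
        rw [ENNReal.ofReal_tsum_of_nonneg (fun k => by linarith [hq1 k]) hsum1q]
        exact tsum_congr hPE
      rw [h1]
      exact ENNReal.ofReal_ne_top
    set Sg : Set (ℕ → ℕ) := {g | ∃ N, ∀ k, N ≤ k → g k = mk k} with hSg_def
    refine ⟨bO1inf '' Sg, (O1aux.countable_eventually_eq mk).image _, ?_⟩
    have hms : MeasurableSet (bO1inf '' Sg) :=
      ((O1aux.countable_eventually_eq mk).image _).measurableSet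
    rw [hmapP _ hms]
    apply le_antisymm prob_le_one
    have hsub : (Filter.limsup E Filter.atTop)ᶜ ⊆ ξ ⁻¹' (bO1inf '' Sg) := by
      intro ω hω
      have hnot : ¬ (∀ N, ∃ k, N ≤ k ∧ ω ∈ E k) := by
        intro hcontra
        apply hω
        rw [Filter.limsup_eq_iInf_iSup_of_nat]
        simp only [Set.iInf_eq_iInter, Set.iSup_eq_iUnion, Set.mem_iInter, Set.mem_iUnion]
        intro n
        obtain ⟨k, hk1, hk2⟩ := hcontra n
        exact ⟨k, hk1, hk2⟩
      push_neg at hnot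
      obtain ⟨N, hN⟩ := hnot
      refine ⟨seq ω, ⟨N, fun k hk => ?_⟩, (hξ ω).symm⟩
      have := hN k hk
      simpa [hE_def] using this
    calc (1 : ENNReal) = P ((Filter.limsup E Filter.atTop)ᶜ) := by
          rw [prob_compl_eq_one_sub (MeasurableSet.measurableSet_limsup hEmeas), hBC]
          simp
    _ ≤ P (ξ ⁻¹' (bO1inf '' Sg)) := measure_mono hsub
  -- final assembly
  have hnotboth : ¬ ((∃ s : Set ℝ, s.Countable ∧ P.map ξ s = 1) ∧ (∀ x : ℝ, P.map ξ {x} = 0)) := by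
    rintro ⟨⟨s, hsc, hs1⟩, hcont'⟩
    have h0 : P.map ξ s = 0 := by
      have hbi : s = ⋃ x ∈ s, ({x} : Set ℝ) := by simp
      rw [hbi]
      exact (measure_biUnion_null_iff hsc).mpr (fun x _ => hcont' x)
    rw [h0] at hs1
    norm_num at hs1
  constructor
  · constructor
    · intro hdisc'
      rcases lt_or_eq_of_le hQ0 with h | h
      · exact h
      · exact absurd ⟨hdisc', hcont h.symm⟩ hnotboth
    · exact hdisc
  · constructor
    · intro hcont'
      by_contra hne
      have hQpos : 0 < Q := lt_of_le_of_ne hQ0 (Ne.symm hne)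
      exact hnotboth ⟨hdisc hQpos, hcont'⟩
    · exact hcont
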